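/- Let V be a Fréchet space (a complete metrizable locally convex real topological vector space), let V* be its topological dual, and let P be a V*-palette on V that contains every convex compact subset of V. If the palette topology τ_P on V* is metrizable, then some element of P has nonempty interior in V. -/

import Mathlib

open Pointwise

/-- Let `V` be a Fréchet space (complete metrizable locally convex real tvs), `V*` its
topological dual, and `P` a `V*`-palette on `V` containing all convex compact subsets.
If the palette topology `τ_P` on `V*` is metrizable, then some member of `P` has
nonempty interior in `V`. -/
theorem stmt5 (V : Type*)
    [AddCommGroup V] [Module ℝ V] [UniformSpace V] [IsUniformAddGroup V]
    [ContinuousSMul ℝ V] [LocallyConvexSpace ℝ V] [CompleteSpace V]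
    [TopologicalSpace.MetrizableSpace V]
    (P : Set (Set V))
    (h1 : ∀ p ∈ P, Bornology.IsVonNBounded ℝ p)
    (h2 : ∀ p ∈ P, ∀ q ∈ P, p ∪ q ∈ P)
    (h3 : ∀ p ∈ P, ∀ c : ℝ, c • p ∈ P)
    (h4 : ∀ p ∈ P, ∀ v : V, closure (convexHull ℝ (p ∪ {v})) ∈ P)
    (h5 : Dense (⋃ p ∈ P, p))
    (hcc : ∀ K : Set V, IsCompact K → Convex ℝ K → K ∈ P)
    (τP : TopologicalSpace (V →L[ℝ] ℝ))
    (hτP : τP = TopologicalSpace.generateFrom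
      {S : Set (V →L[ℝ] ℝ) | ∃ p ∈ P, ∃ O : Set ℝ, IsOpen O ∧
        S = {f : V →L[ℝ] ℝ | ∀ x ∈ p, f x ∈ O}})
    (hmetr : @TopologicalSpace.MetrizableSpace (V →L[ℝ] ℝ) τP) :
    ∃ p ∈ P, (interior p).Nonempty := by
  classical
  by_contra hcon
  push_neg at hcon
  -- hcon : ∀ p ∈ P, interior p = ∅
  -- V is a Baire space
  haveI : Filter.IsCountablyGenerated (uniformity V) := by
    rw [uniformity_eq_comap_nhds_zero V]; infer_instance
  haveI : BaireSpace V := inferInstance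
  haveI : Nonempty V := ⟨0⟩
  set B : Set (Set (V →L[ℝ] ℝ)) := {S : Set (V →L[ℝ] ℝ) | ∃ p ∈ P, ∃ O : Set ℝ, IsOpen O ∧
      S = {f : V →L[ℝ] ℝ | ∀ x ∈ p, f x ∈ O}} with hBdef
  -- countable basis of neighborhoods of 0 for τP
  haveI hPM : @TopologicalSpace.PseudoMetrizableSpace _ τP :=
    @TopologicalSpace.MetrizableSpace.toPseudoMetrizableSpace _ τP hmetr
  haveI hFC : @FirstCountableTopology _ τP :=
    @TopologicalSpace.PseudoMetrizableSpace.firstCountableTopology _ τP hPM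
  haveI hCG : (@nhds _ τP (0 : V →L[ℝ] ℝ)).IsCountablyGenerated :=
    @FirstCountableTopology.nhds_generated_countable _ τP hFC 0
  obtain ⟨U, hU⟩ := (@nhds _ τP (0 : V →L[ℝ] ℝ)).exists_antitone_basis
  have hbasis := @TopologicalSpace.isTopologicalBasis_of_subbasis _ τP B hτP
  -- each U n contains a "polar-type" set for some q ∈ P
  have key : ∀ n : ℕ, ∃ q ∈ P, {f : V →L[ℝ] ℝ | ∀ x ∈ q, |f x| < 1} ⊆ U n := by
    intro n
    have hUn : U n ∈ @nhds _ τP (0 : V →L[ℝ] ℝ) := hU.toHasBasis.mem_of_mem trivial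
    obtain ⟨t, ht, h0t, htU⟩ :=
      (TopologicalSpace.IsTopologicalBasis.mem_nhds_iff (t := τP) hbasis).mp hUn
    obtain ⟨G, ⟨hGfin, hGB⟩, rfl⟩ := ht
    have main : ∀ G : Set (Set (V →L[ℝ] ℝ)), G.Finite → G ⊆ B →
        (0 : V →L[ℝ] ℝ) ∈ ⋂₀ G →
        ∃ q ∈ P, {f : V →L[ℝ] ℝ | ∀ x ∈ q, |f x| < 1} ⊆ ⋂₀ G := by
      intro G hG
      refine Set.Finite.induction_on G hG (fun _ _ => ⟨∅, hcc ∅ isCompact_empty convex_empty, by simp⟩)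
        (fun {S G} hSG hGfin IH => ?_)
      intro hsub h0
      rw [Set.sInter_insert] at h0 ⊢
      obtain ⟨q1, hq1, hq1sub⟩ := IH (fun x hx => hsub (Set.mem_insert_of_mem _ hx)) h0.2
      have hSB : S ∈ B := hsub (Set.mem_insert _ _)
      obtain ⟨p, hp, O, hO, rfl⟩ := hSB
      rcases Set.eq_empty_or_nonempty p with rfl | ⟨x0, hx0⟩
      · exact ⟨q1, hq1, fun f hf => ⟨by simp, hq1sub hf⟩⟩
      · have h0O : (0 : ℝ) ∈ O := by simpa using h0.1 x0 hx0
        obtain ⟨ε, hε, hball⟩ := Metric.isOpen_iff.mp hO 0 h0O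
        refine ⟨ε⁻¹ • p ∪ q1, h2 _ (h3 p hp ε⁻¹) _ hq1, fun f hf =>
          ⟨?_, hq1sub (fun x hx => hf x (Set.mem_union_right _ hx))⟩⟩
        intro x hx
        have hmem : ε⁻¹ • x ∈ ε⁻¹ • p ∪ q1 := Set.mem_union_left _ ⟨x, hx, rfl⟩
        have habs : |f (ε⁻¹ • x)| < 1 := hf _ hmem
        rw [map_smul, smul_eq_mul, abs_mul, abs_inv, abs_of_pos hε] at habs
        have hfx : |f x| < ε := by
          rw [inv_mul_lt_iff₀ hε, mul_one] at habs
          exact habs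
        apply hball
        rw [Metric.mem_ball, Real.dist_eq, sub_zero]
        exact hfx
    obtain ⟨q, hqP, hq⟩ := main G hGfin hGB h0t
    exact ⟨q, hqP, hq.trans htU⟩
  choose q hqP hqU using key
  -- the symmetric closed convex hulls
  set A : ℕ → Set V := fun n => (q n ∪ (-1 : ℝ) • q n) ∪ {0} with hAdef
  set C : ℕ → Set V := fun n => closure (convexHull ℝ (A n)) with hCdef
  have hCP : ∀ n, C n ∈ P := by
    intro n
    have := h4 _ (h2 _ (hqP n) _ (h3 _ (hqP n) (-1))) 0
    simpa [hCdef, hAdef] using this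
  have hCcl : ∀ n, IsClosed (C n) := fun n => isClosed_closure
  have hCcv : ∀ n, Convex ℝ (C n) := fun n => (convex_convexHull ℝ _).closure
  have hC0 : ∀ n, (0 : V) ∈ C n := fun n =>
    subset_closure (subset_convexHull ℝ _ (Set.mem_union_right _ rfl))
  have hqC : ∀ n, q n ⊆ C n := fun n =>
    (Set.subset_union_left.trans Set.subset_union_left).trans
      ((subset_convexHull ℝ _).trans subset_closure)
  have hCsym : ∀ n, ∀ x ∈ C n, -x ∈ C n := by
    intro n x hx
    have hAstep : ∀ a ∈ A n, -a ∈ A n := by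
      rintro a ((h | ⟨b, hb, rfl⟩) | h)
      · exact Or.inl (Or.inr ⟨a, h, by simp⟩)
      · refine Or.inl (Or.inl ?_)
        simpa using hb
      · simp only [Set.mem_singleton_iff] at h
        subst h
        exact Or.inr (by simp)
    have hAeq : -A n = A n := by
      apply Set.Subset.antisymm
      · intro y hy
        have : -y ∈ A n := hy
        simpa using hAstep _ this
      · intro y hy
        exact (Set.mem_neg).mpr (hAstep _ hy)
    have hCeq : -C n = C n := by
      show -closure (convexHull ℝ (A n)) = closure (convexHull ℝ (A n))
      rw [neg_closure, ← convexHull_neg, hAeq]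
    rw [← hCeq]
    exact Set.neg_mem_neg.mpr hx
  -- Baire category: find v outside all dilates of the C n
  have hcov : ∃ v : V, ∀ n k : ℕ, v ∉ ((k : ℝ) + 1) • C n := by
    by_contra hvf
    push_neg at hvf
    have huniv : ⋃ nk : ℕ × ℕ, ((nk.2 : ℝ) + 1) • C nk.1 = Set.univ := by
      apply Set.eq_univ_of_forall
      intro v
      obtain ⟨n, k, hnk⟩ := hvf v
      exact Set.mem_iUnion.mpr ⟨(n, k), hnk⟩
    obtain ⟨nk, hnk⟩ := nonempty_interior_of_iUnion_of_closed
      (fun nk : ℕ × ℕ => (hCcl nk.1).smul_of_ne_zero (by positivity)) huniv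
    have : interior (((nk.2 : ℝ) + 1) • C nk.1) = ∅ :=
      hcon _ (h3 _ (hCP nk.1) _)
    rw [this] at hnk
    exact Set.not_nonempty_empty hnk
  obtain ⟨v, hv⟩ := hcov
  -- the singleton {v} is in P, giving a subbasic τP-neighborhood of 0
  have hvP : ({v} : Set V) ∈ P := hcc _ isCompact_singleton (convex_singleton v)
  set T : Set (V →L[ℝ] ℝ) := {f : V →L[ℝ] ℝ | ∀ x ∈ ({v} : Set V), f x ∈ Set.Iio (1 : ℝ)}
    with hTdef
  have hTopen : @IsOpen _ τP T := by
    rw [hτP]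
    exact TopologicalSpace.GenerateOpen.basic _ ⟨{v}, hvP, Set.Iio 1, isOpen_Iio, rfl⟩
  have hT0 : (0 : V →L[ℝ] ℝ) ∈ T := by
    intro x hx
    simp
  have hTnhds : T ∈ @nhds _ τP (0 : V →L[ℝ] ℝ) := hTopen.mem_nhds hT0
  obtain ⟨j, -, hjT⟩ := hU.toHasBasis.mem_iff.mp hTnhds
  -- separate v/4 from C j
  have hv4 : (4 : ℝ)⁻¹ • v ∉ C j := by
    intro hmem
    apply hv j 3
    have h41 : ((3 : ℕ) : ℝ) + 1 = 4 := by norm_num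
    rw [h41, Set.mem_smul_set_iff_inv_smul_mem₀ (by norm_num : (4 : ℝ) ≠ 0)]
    exact hmem
  obtain ⟨f, u, hfu, huf⟩ := geometric_hahn_banach_closed_point (hCcv j) (hCcl j) hv4
  have hu0 : (0 : ℝ) < u := by simpa using hfu 0 (hC0 j)
  set g : V →L[ℝ] ℝ := (2 * u)⁻¹ • f with hgdef
  have hg1 : ∀ x ∈ q j, |g x| < 1 := by
    intro x hx
    have hx1 : f x < u := hfu x (hqC j hx)
    have hx2 : -u < f x := by
      have := hfu (-x) (hCsym j x (hqC j hx))
      rw [map_neg] at this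
      linarith
    have habs : |f x| < u := abs_lt.mpr ⟨hx2, hx1⟩
    have : |g x| = (2 * u)⁻¹ * |f x| := by
      rw [hgdef]
      simp only [ContinuousLinearMap.coe_smul', Pi.smul_apply, smul_eq_mul, abs_mul]
      rw [abs_of_pos (by positivity : (0:ℝ) < (2 * u)⁻¹)]
    rw [this]
    calc (2 * u)⁻¹ * |f x| < (2 * u)⁻¹ * u := by
          apply mul_lt_mul_of_pos_left habs (by positivity)
      _ < 1 := by
          rw [inv_mul_lt_iff₀ (by positivity : (0:ℝ) < 2 * u), mul_one]
          linarith
  have hgv : 1 < g v := by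
    have h4u : 4 * u < f v := by
      have := huf
      rw [map_smul, smul_eq_mul] at this
      linarith
    have : g v = (2 * u)⁻¹ * f v := by
      rw [hgdef]; simp
    rw [this]
    have h2 : (2 * u)⁻¹ * (4 * u) < (2 * u)⁻¹ * f v :=
      mul_lt_mul_of_pos_left h4u (by positivity)
    have h3' : (2 * u)⁻¹ * (4 * u) = 2 := by
      field_simp
      ring
    linarith
  have hgT : g ∈ T := hjT (hqU j (fun x hx => hg1 x hx))
  have : g v < 1 := hgT v rfl
  linarith
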